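/- arXiv:1302.2857 — 2 statements merged into one kernel-verified Lean document; each statement's English description precedes it below -/
import Mathlib

section
/- Let (I,J,K) be a hypercomplex structure on E. Then Ω^♯ = (1/2)·(I + iK) is a holomorphic symplectic structure on E relative to J; explicitly: ⟨Ω^♯ξ, η⟩ = −⟨ξ, Ω^♯η⟩ for all ξ, η ∈ E_ℂ; Ω^♯(L_J) = 0 and Ω^♯(L*_J) ⊆ L_J; Ω^♯Ω̄^♯ + Ω̄^♯Ω^♯ = −id_{E_ℂ}; and for all ξ, η, ζ ∈ L*_J: ρ(ξ)Ω(η,ζ) − ρ(η)Ω(ξ,ζ) + ρ(ζ)Ω(ξ,η) − Ω(ξ∘η, ζ) + Ω(ξ∘ζ, η) − Ω(η∘ζ, ξ) = 0. -/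
open scoped TensorProduct
section BC

variable {M N P : Type} [AddCommGroup M] [Module ℝ M] [AddCommGroup N] [Module ℝ N]
  [AddCommGroup P] [Module ℝ P]

/-- Complex-bilinear extension of an `ℝ`-bilinear map to the complexifications. -/
noncomputable def bcBilin (B : M →ₗ[ℝ] N →ₗ[ℝ] P) :
    ℂ ⊗[ℝ] M →ₗ[ℂ] ℂ ⊗[ℝ] N →ₗ[ℂ] ℂ ⊗[ℝ] P :=
  LinearMap.liftBaseChange ℂ ((LinearMap.baseChangeHom ℝ ℂ N P) ∘ₗ B)

/-- Complex conjugation on the complexification `ℂ ⊗[ℝ] M`. -/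
noncomputable def conjT (M : Type) [AddCommGroup M] [Module ℝ M] :
    ℂ ⊗[ℝ] M →ₗ[ℝ] ℂ ⊗[ℝ] M :=
  TensorProduct.map Complex.conjAe.toLinearMap LinearMap.id

/-- The `i`-eigenspace of a `ℂ`-linear endomorphism of `ℂ ⊗[ℝ] M`. -/
def eigP (Jc : ℂ ⊗[ℝ] M →ₗ[ℂ] ℂ ⊗[ℝ] M) : Set (ℂ ⊗[ℝ] M) :=
  {e | Jc e = Complex.I • e}

/-- The `-i`-eigenspace of a `ℂ`-linear endomorphism of `ℂ ⊗[ℝ] M`. -/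
def eigM (Jc : ℂ ⊗[ℝ] M →ₗ[ℂ] ℂ ⊗[ℝ] M) : Set (ℂ ⊗[ℝ] M) :=
  {e | Jc e = -(Complex.I • e)}

end BC

/-- An (algebraic) Courant algebroid: a commutative `ℝ`-algebra `A`, an `A`-module `E`,
a nondegenerate symmetric `A`-bilinear pairing, an anchor with values in `ℝ`-linear
derivations of `A`, a map `Dm : A → E`, and an `ℝ`-bilinear Dorfman bracket. -/
structure CourantAlgebroid (A E : Type) [CommRing A] [Algebra ℝ A]
    [AddCommGroup E] [Module ℝ E] [Module A E] [IsScalarTower ℝ A E] : Type where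
  pair : E →ₗ[A] E →ₗ[A] A
  pair_symm : ∀ x y, pair x y = pair y x
  pair_nondeg : ∀ x, (∀ y, pair x y = 0) → x = 0
  anchor : E →ₗ[A] Derivation ℝ A A
  Dm : A →ₗ[ℝ] E
  pair_Dm : ∀ (f : A) (x : E), pair (Dm f) x = (1/2 : ℝ) • anchor x f
  brac : E →ₗ[ℝ] E →ₗ[ℝ] E
  brac_leibniz : ∀ x y z, brac x (brac y z) = brac (brac x y) z + brac y (brac x z)
  anchor_brac : ∀ (x y : E) (f : A),
    anchor (brac x y) f = anchor x (anchor y f) - anchor y (anchor x f)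
  brac_smul : ∀ (f : A) (x y : E), brac x (f • y) = anchor x f • y + f • brac x y
  brac_add_swap : ∀ x y, brac x y + brac y x = (2 : ℝ) • Dm (pair x y)
  Dm_brac : ∀ (f : A) (x : E), brac (Dm f) x = 0
  anchor_pair : ∀ x y z, anchor x (pair y z) = pair (brac x y) z + pair y (brac x z)

namespace CourantAlgebroid

variable {A E : Type} [CommRing A] [Algebra ℝ A]
    [AddCommGroup E] [Module ℝ E] [Module A E] [IsScalarTower ℝ A E]

/-- The Nijenhuis concomitant of two operators with respect to a bracket. -/
def nijGen {M : Type*} [AddCommGroup M] (br : M → M → M) (F G : M → M) (U V : M) : M :=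
  br (F U) (G V) - F (br U (G V)) - G (br (F U) V) + F (G (br U V))
    + br (G U) (F V) - G (br U (F V)) - F (br (G U) V) + G (F (br U V))

/-- The Nijenhuis concomitant `N(F,G)` of two `A`-linear endomorphisms of `E`. -/
def nij (C : CourantAlgebroid A E) (F G : E →ₗ[A] E) (U V : E) : E :=
  nijGen (fun x y => C.brac x y) (fun e => F e) (fun e => G e) U V

/-- An almost complex structure: an orthogonal endomorphism squaring to `-1`. -/
def IsAlmostComplexStr (C : CourantAlgebroid A E) (J : E →ₗ[A] E) : Prop :=
  (∀ e, J (J e) = -e) ∧ ∀ x y, C.pair (J x) (J y) = C.pair x y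

/-- A complex structure: an almost complex structure with vanishing Nijenhuis concomitant. -/
def IsComplexStr (C : CourantAlgebroid A E) (J : E →ₗ[A] E) : Prop :=
  C.IsAlmostComplexStr J ∧ ∀ U V, C.nij J J U V = 0

/-- An almost hypercomplex structure: a triple of almost complex structures
satisfying the quaternionic relations. -/
def IsAlmostHypercomplex (C : CourantAlgebroid A E) (I J K : E →ₗ[A] E) : Prop :=
  C.IsAlmostComplexStr I ∧ C.IsAlmostComplexStr J ∧ C.IsAlmostComplexStr K ∧
    ∀ e, I (J (K e)) = -e

/-- A hypercomplex structure: an almost hypercomplex structure all of whose six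
Nijenhuis concomitants vanish. -/
def IsHypercomplex (C : CourantAlgebroid A E) (I J K : E →ₗ[A] E) : Prop :=
  C.IsAlmostHypercomplex I J K ∧
    (∀ U V, C.nij I I U V = 0) ∧ (∀ U V, C.nij I J U V = 0) ∧ (∀ U V, C.nij I K U V = 0) ∧
    (∀ U V, C.nij J J U V = 0) ∧ (∀ U V, C.nij J K U V = 0) ∧ (∀ U V, C.nij K K U V = 0)

/-- The Poisson-type bracket on `A` induced by a skew-symmetric endomorphism `F`. -/
def pb (C : CourantAlgebroid A E) (F : E →ₗ[A] E) (f g : A) : A :=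
  C.pair (F (C.Dm f)) (C.Dm g)

/-- `Δ_f(U,V)` associated with an almost hypercomplex triple. -/
def Delta (C : CourantAlgebroid A E) (I J K : E →ₗ[A] E) (f : A) (U V : E) : E :=
  C.pair U V • C.Dm f + C.pair (I U) V • I (C.Dm f) + C.pair (J U) V • J (C.Dm f)
    + C.pair (K U) V • K (C.Dm f)

/-- A hypercomplex connection relative to an almost hypercomplex triple. -/
def IsHConn (C : CourantAlgebroid A E) (I J K : E →ₗ[A] E)
    (conn : E →ₗ[ℝ] E →ₗ[ℝ] E) : Prop :=
  (∀ (f : A) (U V : E), conn (f • U) V = f • conn U V) ∧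
  (∀ (f : A) (U V : E),
    conn U (f • V) = C.anchor U f • V + f • conn U V - C.Delta I J K f U V)

/-- The torsion of an `ℝ`-bilinear connection. -/
noncomputable def torsion (C : CourantAlgebroid A E) (conn : E →ₗ[ℝ] E →ₗ[ℝ] E) (U V : E) : E :=
  conn U V - conn V U - (1/2 : ℝ) • (C.brac U V - C.brac V U)

/-- The canonical hypercomplex connection. -/
noncomputable def hconn (C : CourantAlgebroid A E) (I J K : E →ₗ[A] E) (U V : E) : E :=
  -((1/2 : ℝ) • K (C.brac (J V) (I U) - J (C.brac V (I U)) - I (C.brac (J V) U)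
      + J (I (C.brac V U))))

/-- The pairing as an `ℝ`-bilinear map. -/
noncomputable def pairR (C : CourantAlgebroid A E) : E →ₗ[ℝ] E →ₗ[ℝ] A :=
  LinearMap.mk₂ ℝ (fun x y => C.pair x y)
    (fun x x' y => by simp)
    (fun r x y => by
      show C.pair (r • x) y = r • C.pair x y
      rw [← algebraMap_smul A r x, map_smul, LinearMap.smul_apply, algebraMap_smul])
    (fun x y y' => by simp)
    (fun r x y => by
      show C.pair x (r • y) = r • C.pair x y
      rw [← algebraMap_smul A r y, map_smul, algebraMap_smul])

/-- The anchor as an `ℝ`-bilinear map `E → A → A`. -/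
noncomputable def rhoR (C : CourantAlgebroid A E) : E →ₗ[ℝ] A →ₗ[ℝ] A :=
  LinearMap.mk₂ ℝ (fun x f => C.anchor x f)
    (fun x x' f => by simp)
    (fun r x f => by
      show C.anchor (r • x) f = r • C.anchor x f
      rw [← algebraMap_smul A r x, map_smul, Derivation.smul_apply, algebraMap_smul])
    (fun x f f' => by simp)
    (fun r x f => by simp)

/-- The `A`-module structure on `E` as an `ℝ`-bilinear map. -/
noncomputable def smulR (A E : Type) [CommRing A] [Algebra ℝ A]
    [AddCommGroup E] [Module ℝ E] [Module A E] [IsScalarTower ℝ A E] :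
    A →ₗ[ℝ] E →ₗ[ℝ] E :=
  LinearMap.mk₂ ℝ (fun a e => a • e)
    (fun a a' e => add_smul a a' e)
    (fun r a e => smul_assoc r a e)
    (fun a e e' => smul_add a e e')
    (fun r a e => smul_comm a r e)

/-- Complex-bilinear extension of the pairing. -/
noncomputable def pairC (C : CourantAlgebroid A E) :
    ℂ ⊗[ℝ] E →ₗ[ℂ] ℂ ⊗[ℝ] E →ₗ[ℂ] ℂ ⊗[ℝ] A := bcBilin C.pairR

/-- Complex-bilinear extension of the Dorfman bracket. -/
noncomputable def bracC (C : CourantAlgebroid A E) :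
    ℂ ⊗[ℝ] E →ₗ[ℂ] ℂ ⊗[ℝ] E →ₗ[ℂ] ℂ ⊗[ℝ] E := bcBilin C.brac

/-- Complex-bilinear extension of the anchor. -/
noncomputable def rhoC (C : CourantAlgebroid A E) :
    ℂ ⊗[ℝ] E →ₗ[ℂ] ℂ ⊗[ℝ] A →ₗ[ℂ] ℂ ⊗[ℝ] A := bcBilin C.rhoR

/-- Complex-bilinear extension of the `A`-action on `E`. -/
noncomputable def smulC (C : CourantAlgebroid A E) :
    ℂ ⊗[ℝ] A →ₗ[ℂ] ℂ ⊗[ℝ] E →ₗ[ℂ] ℂ ⊗[ℝ] E := bcBilin (smulR A E)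

/-- The `ℂ`-linear extension of an `A`-linear endomorphism of `E` to `ℂ ⊗[ℝ] E`. -/
noncomputable def cext (F : E →ₗ[A] E) : ℂ ⊗[ℝ] E →ₗ[ℂ] ℂ ⊗[ℝ] E :=
  (F.restrictScalars ℝ).baseChange ℂ

/-- `Ω^♯ = (1/2)(I + iK)` associated with an (almost) hypercomplex triple. -/
noncomputable def OmS (I K : E →ₗ[A] E) : ℂ ⊗[ℝ] E →ₗ[ℂ] ℂ ⊗[ℝ] E :=
  (1/2 : ℂ) • (cext I + Complex.I • cext K)

/-- `Ω̄^♯ = (1/2)(I - iK)` associated with an (almost) hypercomplex triple. -/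
noncomputable def ObS (I K : E →ₗ[A] E) : ℂ ⊗[ℝ] E →ₗ[ℂ] ℂ ⊗[ℝ] E :=
  (1/2 : ℂ) • (cext I - Complex.I • cext K)

/-- `Ω(ξ,η) = ⟨Ω^♯ξ, η⟩`. -/
noncomputable def Omf (C : CourantAlgebroid A E) (I K : E →ₗ[A] E)
    (x y : ℂ ⊗[ℝ] E) : ℂ ⊗[ℝ] A :=
  C.pairC (OmS I K x) y

/-- The complexified hypercomplex connection on `ℂ ⊗[ℝ] E`. -/
noncomputable def hconnC (C : CourantAlgebroid A E) (I J K : E →ₗ[A] E)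
    (U V : ℂ ⊗[ℝ] E) : ℂ ⊗[ℝ] E :=
  -((1/2 : ℂ) • cext K (C.bracC (cext J V) (cext I U) - cext J (C.bracC V (cext I U))
      - cext I (C.bracC (cext J V) U) + cext J (cext I (C.bracC V U))))

end CourantAlgebroid

open CourantAlgebroid

section Aux

namespace CourantAlgebroid

variable {A E : Type} [CommRing A] [Algebra ℝ A] [AddCommGroup E] [Module ℝ E]
    [Module A E] [IsScalarTower ℝ A E]

lemma bcBilin_tmul {M N P : Type} [AddCommGroup M] [Module ℝ M] [AddCommGroup N] [Module ℝ N]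
    [AddCommGroup P] [Module ℝ P] (B : M →ₗ[ℝ] N →ₗ[ℝ] P) (z w : ℂ) (m : M) (n : N) :
    bcBilin B (z ⊗ₜ m) (w ⊗ₜ n) = (z * w) ⊗ₜ B m n := by
  simp [bcBilin, LinearMap.liftBaseChange_tmul, TensorProduct.smul_tmul', smul_eq_mul]

lemma cext_tmul (F : E →ₗ[A] E) (z : ℂ) (e : E) :
    cext F (z ⊗ₜ e) = z ⊗ₜ F e := by
  simp [cext, LinearMap.baseChange_tmul]

lemma pairC_tmul (C : CourantAlgebroid A E) (z w : ℂ) (m n : E) :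
    C.pairC (z ⊗ₜ m) (w ⊗ₜ n) = (z * w) ⊗ₜ C.pair m n := by
  simp [pairC, bcBilin_tmul, pairR]

lemma bracC_tmul (C : CourantAlgebroid A E) (z w : ℂ) (m n : E) :
    C.bracC (z ⊗ₜ m) (w ⊗ₜ n) = (z * w) ⊗ₜ C.brac m n := by
  simp [bracC, bcBilin_tmul]

lemma rhoC_tmul (C : CourantAlgebroid A E) (z w : ℂ) (m : E) (a : A) :
    C.rhoC (z ⊗ₜ m) (w ⊗ₜ a) = (z * w) ⊗ₜ C.anchor m a := by
  simp [rhoC, bcBilin_tmul, rhoR]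

/-- The complexification of `Dm`. -/
noncomputable def DmC (C : CourantAlgebroid A E) : ℂ ⊗[ℝ] A →ₗ[ℂ] ℂ ⊗[ℝ] E :=
  (C.Dm).baseChange ℂ

lemma DmC_tmul (C : CourantAlgebroid A E) (z : ℂ) (a : A) :
    C.DmC (z ⊗ₜ a) = z ⊗ₜ C.Dm a := by
  simp [DmC, LinearMap.baseChange_tmul]

lemma rc_smul {M : Type} [AddCommGroup M] [Module ℝ M] (r : ℝ) (x : ℂ ⊗[ℝ] M) :
    r • x = (r : ℂ) • x := (algebraMap_smul ℂ r x).symm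

lemma cext_comp_eq {F G H : E →ₗ[A] E} (h : ∀ e, F (G e) = H e) (x : ℂ ⊗[ℝ] E) :
    cext F (cext G x) = cext H x := by
  induction x using TensorProduct.induction_on with
  | zero => simp
  | tmul z e => simp [cext_tmul, h]
  | add x y hx hy => simp only [map_add, hx, hy]

lemma cext_comp_eq_neg {F G H : E →ₗ[A] E} (h : ∀ e, F (G e) = -H e) (x : ℂ ⊗[ℝ] E) :
    cext F (cext G x) = -cext H x := by
  induction x using TensorProduct.induction_on with
  | zero => simp
  | tmul z e => simp [cext_tmul, h, TensorProduct.tmul_neg]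
  | add x y hx hy => simp only [map_add, hx, hy]; abel

lemma cext_sq_neg {F : E →ₗ[A] E} (h : ∀ e, F (F e) = -e) (x : ℂ ⊗[ℝ] E) :
    cext F (cext F x) = -x := by
  induction x using TensorProduct.induction_on with
  | zero => simp
  | tmul z e => simp [cext_tmul, h, TensorProduct.tmul_neg]
  | add x y hx hy => simp only [map_add, hx, hy]; abel

lemma pairC_symm' (C : CourantAlgebroid A E) (x y : ℂ ⊗[ℝ] E) :
    C.pairC x y = C.pairC y x := by
  induction x using TensorProduct.induction_on with
  | zero => simp
  | add a b ha hb => simp only [map_add, LinearMap.add_apply, ha, hb]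
  | tmul z m =>
    induction y using TensorProduct.induction_on with
    | zero => simp
    | add a b ha hb => simp only [map_add, LinearMap.add_apply, ha, hb]
    | tmul w n => rw [pairC_tmul, pairC_tmul, C.pair_symm, mul_comm]

lemma pairC_skew (C : CourantAlgebroid A E) {F : E →ₗ[A] E}
    (h : ∀ m n, C.pair (F m) n = -C.pair m (F n)) (x y : ℂ ⊗[ℝ] E) :
    C.pairC (cext F x) y = -C.pairC x (cext F y) := by
  induction x using TensorProduct.induction_on with
  | zero => simp
  | add a b ha hb => simp only [map_add, LinearMap.add_apply, ha, hb]; abel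
  | tmul z m =>
    induction y using TensorProduct.induction_on with
    | zero => simp
    | add a b ha hb => simp only [map_add, LinearMap.add_apply, ha, hb]; abel
    | tmul w n => simp [pairC_tmul, cext_tmul, h, TensorProduct.tmul_neg]

lemma pairC_orth (C : CourantAlgebroid A E) {F : E →ₗ[A] E}
    (h : ∀ m n, C.pair (F m) (F n) = C.pair m n) (x y : ℂ ⊗[ℝ] E) :
    C.pairC (cext F x) (cext F y) = C.pairC x y := by
  induction x using TensorProduct.induction_on with
  | zero => simp
  | add a b ha hb => simp only [map_add, LinearMap.add_apply, ha, hb]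
  | tmul z m =>
    induction y using TensorProduct.induction_on with
    | zero => simp
    | add a b ha hb => simp only [map_add, LinearMap.add_apply, ha, hb]
    | tmul w n => simp [pairC_tmul, cext_tmul, h]

lemma pair_DmC (C : CourantAlgebroid A E) (f : ℂ ⊗[ℝ] A) (x : ℂ ⊗[ℝ] E) :
    C.pairC (C.DmC f) x = (1/2 : ℂ) • C.rhoC x f := by
  induction f using TensorProduct.induction_on with
  | zero => simp
  | add a b ha hb => simp only [map_add, LinearMap.add_apply, ha, hb, smul_add]
  | tmul z a =>
    induction x using TensorProduct.induction_on with
    | zero => simp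
    | add a' b' ha hb => simp only [map_add, LinearMap.add_apply, ha, hb, smul_add]
    | tmul w m =>
      rw [DmC_tmul, pairC_tmul, rhoC_tmul, C.pair_Dm, TensorProduct.tmul_smul,
        rc_smul, mul_comm]
      norm_num

lemma bracC_swap (C : CourantAlgebroid A E) (x y : ℂ ⊗[ℝ] E) :
    C.bracC x y + C.bracC y x = (2 : ℂ) • C.DmC (C.pairC x y) := by
  induction x using TensorProduct.induction_on with
  | zero => simp
  | add a b ha hb =>
    simp only [map_add, LinearMap.add_apply, smul_add]
    linear_combination (norm := module) ha + hb
  | tmul z m =>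
    induction y using TensorProduct.induction_on with
    | zero => simp
    | add a b ha hb =>
      simp only [map_add, LinearMap.add_apply, smul_add]
      linear_combination (norm := module) ha + hb
    | tmul w n =>
      rw [bracC_tmul, bracC_tmul, pairC_tmul, DmC_tmul, mul_comm w z,
        ← TensorProduct.tmul_add, C.brac_add_swap, TensorProduct.tmul_smul, rc_smul]
      norm_num

lemma anchor_pairC (C : CourantAlgebroid A E) (x y z : ℂ ⊗[ℝ] E) :
    C.rhoC x (C.pairC y z) = C.pairC (C.bracC x y) z + C.pairC y (C.bracC x z) := by
  induction x using TensorProduct.induction_on with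
  | zero => simp
  | add a b ha hb =>
    simp only [map_add, LinearMap.add_apply, ha, hb]; abel
  | tmul cx mx =>
    induction y using TensorProduct.induction_on with
    | zero => simp
    | add a b ha hb => simp only [map_add, LinearMap.add_apply, ha, hb]; abel
    | tmul cy my =>
      induction z using TensorProduct.induction_on with
      | zero => simp
      | add a b ha hb => simp only [map_add, LinearMap.add_apply, ha, hb]; abel
      | tmul cz mz =>
        rw [pairC_tmul, rhoC_tmul, bracC_tmul, bracC_tmul, pairC_tmul, pairC_tmul,
          show cx * cy * cz = cx * (cy * cz) by ring,
          show cy * (cx * cz) = cx * (cy * cz) by ring,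
          ← TensorProduct.tmul_add, C.anchor_pair]

lemma nijC (C : CourantAlgebroid A E) {F G : E →ₗ[A] E}
    (h : ∀ U V, C.nij F G U V = 0) (x y : ℂ ⊗[ℝ] E) :
    C.bracC (cext F x) (cext G y) - cext F (C.bracC x (cext G y))
      - cext G (C.bracC (cext F x) y) + cext F (cext G (C.bracC x y))
      + C.bracC (cext G x) (cext F y) - cext G (C.bracC x (cext F y))
      - cext F (C.bracC (cext G x) y) + cext G (cext F (C.bracC x y)) = 0 := by
  induction x using TensorProduct.induction_on with
  | zero => simp
  | add a b ha hb =>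
    simp only [map_add, LinearMap.add_apply]
    linear_combination (norm := module) ha + hb
  | tmul z m =>
    induction y using TensorProduct.induction_on with
    | zero => simp
    | add a b ha hb =>
      simp only [map_add, LinearMap.add_apply]
      linear_combination (norm := module) ha + hb
    | tmul w n =>
      have h' : C.brac (F m) (G n) - F (C.brac m (G n)) - G (C.brac (F m) n)
          + F (G (C.brac m n)) + C.brac (G m) (F n) - G (C.brac m (F n))
          - F (C.brac (G m) n) + G (F (C.brac m n)) = 0 := by
        simpa [nij, nijGen] using h m n
      simp only [cext_tmul, bracC_tmul]
      simp only [← TensorProduct.tmul_sub, ← TensorProduct.tmul_add]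
      rw [h', TensorProduct.tmul_zero]

end CourantAlgebroid

end Aux
set_option maxHeartbeats 1000000 in
theorem stmt13 {A E : Type} [CommRing A] [Algebra ℝ A] [AddCommGroup E] [Module ℝ E]
    [Module A E] [IsScalarTower ℝ A E] (C : CourantAlgebroid A E) (I J K : E →ₗ[A] E)
    (h : C.IsHypercomplex I J K) :
    (∀ ξ η : ℂ ⊗[ℝ] E, C.pairC (OmS I K ξ) η = -C.pairC ξ (OmS I K η)) ∧
    (∀ e ∈ eigP (cext (A := A) (E := E) J), OmS I K e = 0) ∧
    (∀ e ∈ eigM (cext (A := A) (E := E) J), OmS I K e ∈ eigP (cext (A := A) (E := E) J)) ∧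
    (∀ e : ℂ ⊗[ℝ] E, OmS I K (ObS I K e) + ObS I K (OmS I K e) = -e) ∧
    (∀ ξ η ζ : ℂ ⊗[ℝ] E, ξ ∈ eigM (cext J) → η ∈ eigM (cext J) → ζ ∈ eigM (cext J) →
      C.rhoC ξ (C.Omf I K η ζ) - C.rhoC η (C.Omf I K ξ ζ) + C.rhoC ζ (C.Omf I K ξ η)
        - C.Omf I K (C.bracC ξ η) ζ + C.Omf I K (C.bracC ξ ζ) η
        - C.Omf I K (C.bracC η ζ) ξ = 0) := by
  obtain ⟨⟨⟨hII, hIo⟩, ⟨hJJ, hJo⟩, ⟨hKK, hKo⟩, hIJK⟩, nII, nIJ, nIK, nJJ, nJK, nKK⟩ := h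
  -- E-level quaternion identities
  have hIJ : ∀ e, I (J e) = K e := by
    intro e
    have h1 := hIJK (-(K e))
    rw [map_neg, hKK, neg_neg, neg_neg] at h1
    exact h1
  have key : ∀ y, I (J (I (J y))) = -y := by
    intro y; rw [hIJ y, hIJ (K y), hKK]
  have hJI : ∀ z, J (I z) = -(K z) := by
    intro z
    have h1 := key (-(J z))
    rw [map_neg, hJJ, neg_neg, neg_neg] at h1
    have h2 := congrArg I h1
    rw [hII (J (I z)), hIJ z] at h2
    exact neg_eq_iff_eq_neg.mp h2
  have hIK : ∀ e, I (K e) = -(J e) := by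
    intro e; rw [← hIJ e, hII]
  have hKI : ∀ e, K (I e) = J e := by
    intro e
    rw [← hIJ (I e), hJI, map_neg, hIK, neg_neg]
  have skI : ∀ m n, C.pair (I m) n = -C.pair m (I n) := by
    intro m n
    rw [← hIo (I m) n, hII m, map_neg, LinearMap.neg_apply]
  have skK : ∀ m n, C.pair (K m) n = -C.pair m (K n) := by
    intro m n
    rw [← hKo (K m) n, hKK m, map_neg, LinearMap.neg_apply]
  -- complexified identities
  have cII' : ∀ x : ℂ ⊗[ℝ] E, cext I (cext I x) = -x := cext_sq_neg hII
  have cJJ' : ∀ x : ℂ ⊗[ℝ] E, cext J (cext J x) = -x := cext_sq_neg hJJ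
  have cKK' : ∀ x : ℂ ⊗[ℝ] E, cext K (cext K x) = -x := cext_sq_neg hKK
  have cIJ' : ∀ x : ℂ ⊗[ℝ] E, cext I (cext J x) = cext K x := cext_comp_eq hIJ
  have cJI' : ∀ x : ℂ ⊗[ℝ] E, cext J (cext I x) = -cext K x := cext_comp_eq_neg hJI
  have cIK' : ∀ x : ℂ ⊗[ℝ] E, cext I (cext K x) = -cext J x := cext_comp_eq_neg hIK
  have cKI' : ∀ x : ℂ ⊗[ℝ] E, cext K (cext I x) = cext J x := cext_comp_eq hKI
  have hOmS : ∀ x : ℂ ⊗[ℝ] E, cext J x = -(Complex.I • x) → OmS I K x = cext I x := by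
    intro x hx
    have hKx : cext K x = -(Complex.I • cext I x) := by
      rw [← cIJ' x, hx, map_neg, map_smul]
    simp only [OmS, LinearMap.smul_apply, LinearMap.add_apply]
    rw [hKx, smul_neg, smul_smul, Complex.I_mul_I, neg_one_smul, neg_neg]
    module
  refine ⟨?_, ?_, ?_, ?_, ?_⟩
  · -- skewness of Omega
    intro ξ η
    have e1 := C.pairC_skew skI ξ η
    have e2 := C.pairC_skew skK ξ η
    simp only [OmS, LinearMap.smul_apply, LinearMap.add_apply, map_smul, map_add]
    linear_combination (norm := module) (1/2 : ℂ) • e1 + ((1/2 : ℂ) * Complex.I) • e2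
  · -- vanishing on L_J
    intro e he
    simp only [eigP, Set.mem_setOf_eq] at he
    have hKe : cext K e = Complex.I • cext I e := by
      rw [← cIJ' e, he, map_smul]
    simp only [OmS, LinearMap.smul_apply, LinearMap.add_apply]
    rw [hKe, smul_smul, Complex.I_mul_I, neg_one_smul]
    simp
  · -- maps L*_J to L_J
    intro e he
    simp only [eigM, Set.mem_setOf_eq] at he
    have hKe : cext K e = -(Complex.I • cext I e) := by
      rw [← cIJ' e, he, map_neg, map_smul]
    simp only [eigP, Set.mem_setOf_eq]
    rw [hOmS e he, cJI' e, hKe, neg_neg]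
  · -- anticommutation relation
    intro e
    simp only [OmS, ObS, LinearMap.smul_apply, LinearMap.add_apply, LinearMap.sub_apply,
      map_add, map_sub, map_smul]
    simp only [cII', cKK', cIK', cKI']
    simp only [smul_smul, smul_add, smul_sub, smul_neg, neg_smul, one_smul, neg_neg]
    match_scalars <;> (ring_nf; try simp [Complex.I_sq]; try ring)
  · -- the cocycle condition
    intro ξ η ζ hξ hη hζ
    simp only [eigM, Set.mem_setOf_eq] at hξ hη hζ
    -- isotropy of the eigenspace
    have hiso : ∀ u v : ℂ ⊗[ℝ] E, cext J u = -(Complex.I • u) →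
        cext J v = -(Complex.I • v) → C.pairC u v = 0 := by
      intro u v hu hv
      have ho := C.pairC_orth hJo u v
      rw [hu, hv] at ho
      simp only [map_neg, map_smul, LinearMap.neg_apply, LinearMap.smul_apply, smul_neg,
        neg_neg, smul_smul, Complex.I_mul_I, neg_one_smul, one_smul] at ho
      linear_combination (norm := module) (-(1:ℂ)/2) • ho
    have hF3 : ∀ x : ℂ ⊗[ℝ] E,
        C.pairC x ζ + Complex.I • C.pairC (cext J x) ζ = 0 := by
      intro x
      have hm : cext J (x + Complex.I • cext J x)
          = -(Complex.I • (x + Complex.I • cext J x)) := by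
        rw [map_add, map_smul, cJJ' x]
        simp only [smul_add, smul_smul, Complex.I_mul_I, smul_neg, neg_one_smul, one_smul,
          neg_neg]
        module
      have h0 := hiso _ ζ hm hζ
      simp only [map_add, map_smul, LinearMap.add_apply, LinearMap.smul_apply] at h0
      exact h0
    -- eigenspace closure under the bracket
    have hbr : ∀ x y : ℂ ⊗[ℝ] E, cext J x = -(Complex.I • x) →
        cext J y = -(Complex.I • y) →
        cext J (C.bracC x y) = -(Complex.I • C.bracC x y) := by
      intro x y hx hy
      have h8 := C.nijC nJJ x y
      rw [hx, hy] at h8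
      simp only [cJJ'] at h8
      simp only [map_neg, map_smul, LinearMap.neg_apply, LinearMap.smul_apply, smul_neg,
        neg_neg, smul_smul, Complex.I_mul_I, neg_one_smul, one_smul] at h8
      have h8' := congrArg (fun t => Complex.I • t) h8
      simp only [smul_add, smul_sub, smul_neg, smul_smul, Complex.I_mul_I, neg_smul,
        one_smul, smul_zero, neg_neg] at h8'
      linear_combination (norm := module) (-(1:ℂ)/4) • h8'
    have hbξη := hbr ξ η hξ hη
    have hbξζ := hbr ξ ζ hξ hζ
    have hbηζ := hbr η ζ hη hζ
    -- the projected N(I,J) identity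
    have hcKw : cext K (C.bracC ξ η) = -(Complex.I • cext I (C.bracC ξ η)) := by
      rw [← cIJ' (C.bracC ξ η), hbξη, map_neg, map_smul]
    have h9 := C.nijC nIJ ξ η
    rw [hξ, hη, cIJ' (C.bracC ξ η), cJI' (C.bracC ξ η), hcKw] at h9
    simp only [map_neg, map_smul, LinearMap.neg_apply, LinearMap.smul_apply, smul_neg,
      neg_neg, smul_smul, Complex.I_mul_I, neg_one_smul, one_smul] at h9
    have h9p := congrArg (fun t => C.pairC t ζ) h9
    simp only [map_add, map_sub, map_neg, map_smul, map_zero, LinearMap.add_apply,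
      LinearMap.sub_apply, LinearMap.neg_apply, LinearMap.smul_apply,
      LinearMap.zero_apply] at h9p
    have h9p' := congrArg (fun t => Complex.I • t) h9p
    simp only [smul_add, smul_sub, smul_neg, smul_smul, Complex.I_mul_I, neg_smul,
      one_smul, smul_zero, neg_neg] at h9p'
    have e3 : C.pairC (C.bracC (cext I ξ) η) ζ + C.pairC (C.bracC ξ (cext I η)) ζ
        = C.pairC (cext I (C.bracC ξ η)) ζ := by
      linear_combination (norm := module) (1/2 : ℂ) • h9p'
        + (1/2 : ℂ) • hF3 (C.bracC (cext I ξ) η) + (1/2 : ℂ) • hF3 (C.bracC ξ (cext I η))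
    -- skew-symmetry rearrangements
    have e2 := (C.pairC_skew skI η (C.bracC ξ ζ)).trans
      (congrArg Neg.neg (C.pairC_symm' η (cext I (C.bracC ξ ζ))))
    have e5 := (C.pairC_skew skI ξ (C.bracC η ζ)).trans
      (congrArg Neg.neg (C.pairC_symm' ξ (cext I (C.bracC η ζ))))
    -- anchor identities
    have ha1 := C.anchor_pairC ξ (cext I η) ζ
    have ha2 := C.anchor_pairC η (cext I ξ) ζ
    -- bracket symmetrization
    have hsw := C.bracC_swap η (cext I ξ)
    rw [C.pairC_symm' η (cext I ξ)] at hsw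
    have hswp := congrArg (fun t => C.pairC t ζ) hsw
    simp only [map_add, map_smul, LinearMap.add_apply, LinearMap.smul_apply] at hswp
    have hdm := C.pair_DmC (C.pairC (cext I ξ) η) ζ
    simp only [Omf]
    rw [hOmS η hη, hOmS ξ hξ, hOmS _ hbξη, hOmS _ hbξζ, hOmS _ hbηζ]
    linear_combination (norm := module) ha1 + e2 - ha2 - e5 - hswp - (2:ℂ) • hdm + e3
end

section
/- Let (I,J,K) be a hypercomplex structure on E and let a, b ∈ ℝ. Then J_{a,b} := ((1−a²−b²)/(1+a²+b²))·J + (2a/(1+a²+b²))·K + (2b/(1+a²+b²))·I is a complex structure on E, and for every ξ ∈ L*_J one has J_{a,b}((1 + (a+bi)·Ω^♯)ξ) = −i·(1 + (a+bi)·Ω^♯)ξ; that is, (1 + (a+bi)·Ω^♯)(L*_J) is contained in the (−i)-eigenspace of J_{a,b} acting on E_ℂ. -/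
open scoped TensorProduct
open CourantAlgebroid

set_option maxHeartbeats 3200000 in
theorem stmt15 {A E : Type} [CommRing A] [Algebra ℝ A] [AddCommGroup E] [Module ℝ E]
    [Module A E] [IsScalarTower ℝ A E] (C : CourantAlgebroid A E) (I J K : E →ₗ[A] E)
    (h : C.IsHypercomplex I J K) (a b : ℝ) :
    (∀ e : E,
      (((1 - a ^ 2 - b ^ 2) / (1 + a ^ 2 + b ^ 2)) • J + (2 * a / (1 + a ^ 2 + b ^ 2)) • K +
          (2 * b / (1 + a ^ 2 + b ^ 2)) • I)
        ((((1 - a ^ 2 - b ^ 2) / (1 + a ^ 2 + b ^ 2)) • J + (2 * a / (1 + a ^ 2 + b ^ 2)) • K +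
          (2 * b / (1 + a ^ 2 + b ^ 2)) • I) e) = -e) ∧
    (∀ U V : E,
      C.pair ((((1 - a ^ 2 - b ^ 2) / (1 + a ^ 2 + b ^ 2)) • J +
          (2 * a / (1 + a ^ 2 + b ^ 2)) • K + (2 * b / (1 + a ^ 2 + b ^ 2)) • I) U)
        ((((1 - a ^ 2 - b ^ 2) / (1 + a ^ 2 + b ^ 2)) • J +
          (2 * a / (1 + a ^ 2 + b ^ 2)) • K + (2 * b / (1 + a ^ 2 + b ^ 2)) • I) V) =
        C.pair U V) ∧
    (∀ U V : E,
      C.nij (((1 - a ^ 2 - b ^ 2) / (1 + a ^ 2 + b ^ 2)) • J +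
          (2 * a / (1 + a ^ 2 + b ^ 2)) • K + (2 * b / (1 + a ^ 2 + b ^ 2)) • I)
        (((1 - a ^ 2 - b ^ 2) / (1 + a ^ 2 + b ^ 2)) • J +
          (2 * a / (1 + a ^ 2 + b ^ 2)) • K + (2 * b / (1 + a ^ 2 + b ^ 2)) • I) U V = 0) ∧
    (∀ ξ ∈ eigM (cext (A := A) (E := E) J),
      cext (((1 - a ^ 2 - b ^ 2) / (1 + a ^ 2 + b ^ 2)) • J +
          (2 * a / (1 + a ^ 2 + b ^ 2)) • K + (2 * b / (1 + a ^ 2 + b ^ 2)) • I)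
        (ξ + ((a : ℂ) + (b : ℂ) * Complex.I) • OmS I K ξ) =
      -(Complex.I • (ξ + ((a : ℂ) + (b : ℂ) * Complex.I) • OmS I K ξ))) := by
  
  obtain ⟨⟨⟨hI2, hIo⟩, ⟨hJ2, hJo⟩, ⟨hK2, hKo⟩, hIJK⟩, hNII, hNIJ, hNIK, hNJJ, hNJK, hNKK⟩ := h
  have hs : (1 + a ^ 2 + b ^ 2 : ℝ) ≠ 0 := by positivity
  -- multiplication table
  have hJK : ∀ e, J (K e) = I e := by
    intro e
    have h2 := hI2 (J (K e))
    rw [hIJK e, map_neg] at h2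
    exact (neg_inj.mp h2).symm
  have hIJ : ∀ e, I (J e) = K e := by
    intro e
    have h2 := hIJK (-(K e))
    simpa only [map_neg, hK2, neg_neg] using h2
  have hJI : ∀ e, J (I e) = -(K e) := fun e => by rw [← hJK e, hJ2]
  have hIK : ∀ e, I (K e) = -(J e) := fun e => by rw [← hIJ e, hI2]
  have hKI : ∀ e, K (I e) = J e := by
    intro e
    rw [← hIJ (I e), hJI e, map_neg, hIK, neg_neg]
  have hKJ : ∀ e, K (J e) = -(I e) := by
    intro e
    rw [← hIJ (J e), hJ2, map_neg]
  set c1 : ℝ := (1 - a ^ 2 - b ^ 2) / (1 + a ^ 2 + b ^ 2) with hc1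
  set c2 : ℝ := 2 * a / (1 + a ^ 2 + b ^ 2) with hc2
  set c3 : ℝ := 2 * b / (1 + a ^ 2 + b ^ 2) with hc3
  refine ⟨?_, ?_, ?_, ?_⟩
  · -- squares to -1
    intro e
    simp only [LinearMap.add_apply, LinearMap.smul_apply, map_add,
      LinearMap.map_smul_of_tower, hI2, hJ2, hK2, hIJ, hJI, hJK, hKJ, hKI, hIK, smul_neg]
    match_scalars <;> (try simp only [hc1, hc2, hc3]) <;> field_simp [hs] <;> ring
  · -- orthogonality
    intro U V
    have pJK : ∀ U V : E, C.pair (J U) (K V) = -(C.pair U (I V)) := by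
      intro U V
      have hKV : J (-(I V)) = K V := by rw [map_neg, hJI, neg_neg]
      rw [← hKV, hJo, map_neg]
    have pKJ : ∀ U V : E, C.pair (K U) (J V) = C.pair U (I V) := by
      intro U V
      rw [← hKI V, hKo]
    have pJI : ∀ U V : E, C.pair (J U) (I V) = C.pair U (K V) := by
      intro U V
      rw [← hJK V, hJo]
    have pIJ : ∀ U V : E, C.pair (I U) (J V) = -(C.pair U (K V)) := by
      intro U V
      have hJV : I (-(K V)) = J V := by rw [map_neg, hIK, neg_neg]
      rw [← hJV, hIo, map_neg]
    have pKI : ∀ U V : E, C.pair (K U) (I V) = -(C.pair U (J V)) := by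
      intro U V
      have hIV : K (-(J V)) = I V := by rw [map_neg, hKJ, neg_neg]
      rw [← hIV, hKo, map_neg]
    have pIK : ∀ U V : E, C.pair (I U) (K V) = C.pair U (J V) := by
      intro U V
      rw [← hIJ V, hIo]
    simp only [LinearMap.add_apply, LinearMap.smul_apply, map_add,
      LinearMap.map_smul_of_tower, LinearMap.add_apply, LinearMap.smul_apply,
      pJK, pKJ, pJI, pIJ, pKI, pIK, hJo, hKo, hIo, smul_neg]
    match_scalars <;> (try simp only [hc1, hc2, hc3]) <;> field_simp [hs] <;> ring
  · -- Nijenhuis vanishes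
    intro U V
    have hsym : ∀ (F G : E →ₗ[A] E) (U V : E), C.nij F G U V = C.nij G F U V := by
      intro F G U V
      simp only [CourantAlgebroid.nij, CourantAlgebroid.nijGen]
      abel
    have key : C.nij (c1 • J + c2 • K + c3 • I) (c1 • J + c2 • K + c3 • I) U V =
        (c1 * c1) • C.nij J J U V + (c1 * c2) • C.nij J K U V + (c1 * c3) • C.nij J I U V
        + (c2 * c1) • C.nij K J U V + (c2 * c2) • C.nij K K U V + (c2 * c3) • C.nij K I U V
        + (c3 * c1) • C.nij I J U V + (c3 * c2) • C.nij I K U V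
        + (c3 * c3) • C.nij I I U V := by
      simp only [CourantAlgebroid.nij, CourantAlgebroid.nijGen, LinearMap.add_apply,
        LinearMap.smul_apply, map_add, map_smul, LinearMap.map_smul_of_tower, smul_add,
        smul_sub, smul_neg]
      module
    rw [key, hsym J I, hsym K J, hsym K I]
    simp only [hNII, hNIJ, hNIK, hNJJ, hNJK, hNKK, smul_zero, add_zero]
  · -- eigenspace statement
    intro ξ hξ
    have hξ' : cext J ξ = -(Complex.I • ξ) := hξ
    have hcomp : ∀ (F G : E →ₗ[A] E) (x : ℂ ⊗[ℝ] E),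
        cext F (cext G x) = cext (F ∘ₗ G) x := by
      intro F G x
      simp only [cext, ← LinearMap.comp_apply, ← LinearMap.baseChange_comp,
        ← LinearMap.restrictScalars_comp]
    have hsm : ∀ (r : ℝ) (F : E →ₗ[A] E) (x : ℂ ⊗[ℝ] E),
        cext (r • F) x = (r : ℂ) • cext F x := by
      intro r F x
      have h1 : (r • F).restrictScalars ℝ = r • (F.restrictScalars ℝ) := rfl
      rw [cext, h1, LinearMap.baseChange_smul, LinearMap.smul_apply]
      exact (Complex.coe_smul r _).symm
    have hid : ∀ x : ℂ ⊗[ℝ] E, cext (LinearMap.id : E →ₗ[A] E) x = x := by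
      intro x
      have h1 : ((LinearMap.id : E →ₗ[A] E).restrictScalars ℝ) =
          (LinearMap.id : E →ₗ[ℝ] E) := rfl
      rw [cext, h1, LinearMap.baseChange_id]
      rfl
    have hadd : ∀ (F G : E →ₗ[A] E) (x : ℂ ⊗[ℝ] E),
        cext (F + G) x = cext F x + cext G x := by
      intro F G x
      have h1 : (F + G).restrictScalars ℝ =
          F.restrictScalars ℝ + G.restrictScalars ℝ := rfl
      rw [cext, h1, LinearMap.baseChange_add, LinearMap.add_apply]
      rfl
    have hJab : ∀ x : ℂ ⊗[ℝ] E, cext (c1 • J + c2 • K + c3 • I) x =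
        (c1 : ℂ) • cext J x + (c2 : ℂ) • cext K x + (c3 : ℂ) • cext I x := by
      intro x
      rw [hadd, hadd, hsm, hsm, hsm]
    -- complexified table
    have cKξ : cext K ξ = -(Complex.I • cext I ξ) := by
      have h1 : cext I (cext J ξ) = cext K ξ := by
        have h2 : I ∘ₗ J = K := LinearMap.ext hIJ
        rw [hcomp, h2]
      rw [← h1, hξ', map_neg, map_smul]
    have cJIξ : cext J (cext I ξ) = Complex.I • cext I ξ := by
      have h1 : J ∘ₗ I = (-1 : ℝ) • K := by
        apply LinearMap.ext; intro e
        simp [hJI e]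
      rw [hcomp, h1, hsm, cKξ]
      simp
    have cKIξ : cext K (cext I ξ) = -(Complex.I • ξ) := by
      have h1 : K ∘ₗ I = J := LinearMap.ext hKI
      rw [hcomp, h1, hξ']
    have cIIξ : cext I (cext I ξ) = -ξ := by
      have h1 : I ∘ₗ I = (-1 : ℝ) • (LinearMap.id : E →ₗ[A] E) := by
        apply LinearMap.ext; intro e
        simp [hI2 e]
      rw [hcomp, h1, hsm, hid]
      simp
    have hOm : OmS I K ξ = cext I ξ := by
      rw [OmS, LinearMap.smul_apply, LinearMap.add_apply, LinearMap.smul_apply, cKξ,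
        smul_neg, smul_smul, Complex.I_mul_I]
      module
    rw [hOm, map_add, map_smul, hJab ξ, hJab (cext I ξ), hξ', cKξ, cJIξ, cKIξ, cIIξ]
    have hsC : (1 + (a : ℂ) ^ 2 + (b : ℂ) ^ 2) ≠ 0 := by
      have := Complex.ofReal_ne_zero.mpr hs
      push_cast at this
      exact this
    match_scalars <;>
      ((try simp only [hc1, hc2, hc3]); push_cast; field_simp [hsC]; ring_nf; try (simp only [Complex.I_sq]; ring_nf))
end
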